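/- Let p0, p1 ≥ 0 with p0 + p1 > 0 and consider the channel Λ2(ρ) = (p0 ρ + p1 XρX)/(p0+p1) with complementary channel Λ2^c(ρ(x,y,z)) = [[p0/(p0+p1), √(p0p1) x/(p0+p1)], [√(p0p1) x/(p0+p1), p1/(p0+p1)]]. The anti-degradability criterion for Λ2^c, namely tr(𝒥_{Λ2^c}²) − 4√(det 𝒥_{Λ2^c}) ≤ tr(Λ2^c(I)²), holds for all such p0, p1; equivalently it reduces to (p0 − p1)² ≥ 0. Hence Λ2 is degradable. -/

import Mathlib

open Matrix
open scoped Kronecker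

noncomputable section

/-- The complementary channel of `Λ₂(ρ) = (p₀ ρ + p₁ XρX)/(p₀+p₁)`, as a linear map on
(real) 2×2 matrices: on `ρ(x,y,z)` it gives
`(1/(p₀+p₁)) [[p₀, √(p₀p₁)x], [√(p₀p₁)x, p₁]]`. -/
def lam2c (p0 p1 : ℝ) (ρ : Matrix (Fin 2) (Fin 2) ℝ) : Matrix (Fin 2) (Fin 2) ℝ :=
  (p0 + p1)⁻¹ •
    !![p0 * ρ.trace, Real.sqrt (p0 * p1) * (ρ 0 1 + ρ 1 0);
       Real.sqrt (p0 * p1) * (ρ 0 1 + ρ 1 0), p1 * ρ.trace]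

/-- The Choi matrix `𝒥_Φ = 2(Φ⊗I)(|φ⁺⟩⟨φ⁺|) = ∑_{i,j} Φ(|i⟩⟨j|) ⊗ |i⟩⟨j|` of the
complementary channel `Λ₂ᶜ`. -/
def choiLam2c (p0 p1 : ℝ) : Matrix (Fin 2 × Fin 2) (Fin 2 × Fin 2) ℝ :=
  ∑ i : Fin 2, ∑ j : Fin 2,
    lam2c p0 p1 (Matrix.single i j 1) ⊗ₖ Matrix.single i j (1 : ℝ)

/-- An explicit equivalence `Fin 4 ≃ Fin 2 × Fin 2` used to reindex the Choi matrix. -/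
def finPairEquiv : Fin 4 ≃ Fin 2 × Fin 2 where
  toFun := ![(0,0),(0,1),(1,0),(1,1)]
  invFun := fun p => ⟨p.1.val * 2 + p.2.val, by omega⟩
  left_inv := by decide
  right_inv := by decide

/-- The anti-degradability criterion `tr(𝒥²) - 4√(det 𝒥) ≤ tr(Λ₂ᶜ(I)²)` holds for the
complementary channel of `Λ₂(ρ) = (p₀ ρ + p₁ XρX)/(p₀+p₁)`, for all admissible `p₀, p₁`;
it is equivalent to `(p₀-p₁)² ≥ 0`. Hence `Λ₂` is degradable. -/
theorem lam2_degradable (p0 p1 : ℝ) (h0 : 0 ≤ p0) (h1 : 0 ≤ p1) (hpos : 0 < p0 + p1) :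
    ((choiLam2c p0 p1 * choiLam2c p0 p1).trace - 4 * Real.sqrt (choiLam2c p0 p1).det ≤
        (lam2c p0 p1 1 * lam2c p0 p1 1).trace) ∧
    (((choiLam2c p0 p1 * choiLam2c p0 p1).trace - 4 * Real.sqrt (choiLam2c p0 p1).det ≤
        (lam2c p0 p1 1 * lam2c p0 p1 1).trace) ↔ 0 ≤ (p0 - p1) ^ 2) := by
  have hJ : ∀ a i b j : Fin 2, choiLam2c p0 p1 (a, i) (b, j) =
      lam2c p0 p1 (Matrix.single i j 1) a b := by
    intro a i b j
    fin_cases i <;> fin_cases j <;>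
      simp [choiLam2c, Fin.sum_univ_two, Matrix.single]
  set s := Real.sqrt (p0 * p1) with hsdef
  set c := (p0 + p1)⁻¹ with hcdef
  have hs : s * s = p0 * p1 := Real.mul_self_sqrt (mul_nonneg h0 h1)
  -- the reindexed Choi matrix, explicitly
  have hsub : (choiLam2c p0 p1).submatrix finPairEquiv finPairEquiv =
      !![c*p0, 0, 0, c*s; 0, c*p0, c*s, 0; 0, c*s, c*p1, 0; c*s, 0, 0, c*p1] := by
    ext i j
    fin_cases i <;> fin_cases j <;>
      simp only [Matrix.submatrix_apply, finPairEquiv, Equiv.coe_fn_mk, Matrix.cons_val_zero,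
        Matrix.cons_val_one, Matrix.head_cons, Matrix.cons_val', Matrix.empty_val',
        Matrix.cons_val_fin_one, hJ] <;>
      simp [lam2c, Matrix.single, Matrix.trace_fin_two, hcdef, hsdef]
  -- determinant vanishes
  have hdet : (choiLam2c p0 p1).det = 0 := by
    rw [← Matrix.det_submatrix_equiv_self finPairEquiv, hsub]
    norm_num [Matrix.det_succ_row_zero, Fin.sum_univ_succ, Fin.castSucc, Fin.castAdd,
      Fin.castLE, Matrix.cons_val_two, Matrix.cons_val_three, Matrix.vecHead, Matrix.vecTail]
    linear_combination (c^4*(s*s - p0*p1)) * hs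
  -- trace of the square of the Choi matrix
  have htrsub : ((choiLam2c p0 p1 * choiLam2c p0 p1).submatrix finPairEquiv finPairEquiv).trace
      = (choiLam2c p0 p1 * choiLam2c p0 p1).trace := by
    simp only [Matrix.trace, Matrix.diag_apply, Matrix.submatrix_apply]
    exact Equiv.sum_comp finPairEquiv (fun p => (choiLam2c p0 p1 * choiLam2c p0 p1) p p)
  have htrJ : (choiLam2c p0 p1 * choiLam2c p0 p1).trace
      = c^2*(2*p0^2 + 2*p1^2 + 4*(s*s)) := by
    rw [← htrsub, ← Matrix.submatrix_mul_equiv (choiLam2c p0 p1) (choiLam2c p0 p1)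
      finPairEquiv finPairEquiv finPairEquiv, hsub]
    simp [Matrix.trace, Fin.sum_univ_four, Matrix.mul_apply]
    ring
  -- trace of the square of Λ₂ᶜ(I)
  have htrI : (lam2c p0 p1 1 * lam2c p0 p1 1).trace = c^2*(4*p0^2 + 4*p1^2) := by
    simp [lam2c, Matrix.trace_fin_two, Matrix.mul_apply, Fin.sum_univ_two, Matrix.one_apply,
      Matrix.trace_one]
    ring
  have hmain : (choiLam2c p0 p1 * choiLam2c p0 p1).trace -
      4 * Real.sqrt (choiLam2c p0 p1).det ≤ (lam2c p0 p1 1 * lam2c p0 p1 1).trace := by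
    rw [htrJ, htrI, hdet, Real.sqrt_zero, hs]
    nlinarith [sq_nonneg (c*(p0-p1))]
  exact ⟨hmain, ⟨fun _ => sq_nonneg _, fun _ => hmain⟩⟩

end
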